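/- Let A, B ∈ ℝ^{n×n} be symmetric matrices, η > 0, γ > 0, and define the gradient descent iterates X^{(0)} = 0 and X^{(t+1)} = X^{(t)} − γ(A²X^{(t)} + X^{(t)}B² − 2AX^{(t)}B + η²X^{(t)} − J). Then for every t ≥ 0, X^{(t)} = Σ_{i,j=1}^n [(1 − (1 − γη² − γ(λ_i − μ_j)²)^t)/(η² + (λ_i − μ_j)²)] u_i u_i^T J v_j v_j^T. In particular, if γ < 1/(η² + (λ_i − μ_j)²) for all i, j ∈ [n], then X^{(t)} converges to the GRAMPA similarity matrix X̂ as t → ∞. -/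
import Mathlib


open MeasureTheory ProbabilityTheory Matrix Finset
open scoped NNReal ENNReal

noncomputable section

/-- `(lam, u)` is a spectral decomposition of the symmetric matrix `A`:
the vectors `u i` are orthonormal and `A = ∑ i, lam i • u i (u i)ᵀ`. -/
def IsSpectralDecomp {n : ℕ} (A : Matrix (Fin n) (Fin n) ℝ)
    (lam : Fin n → ℝ) (u : Fin n → Fin n → ℝ) : Prop :=
  (∀ i j, (∑ k, u i k * u j k) = if i = j then (1 : ℝ) else 0) ∧
  A = ∑ i, lam i • Matrix.vecMulVec (u i) (u i)

/-- The all-ones matrix `J`. -/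
def matJ (n : ℕ) : Matrix (Fin n) (Fin n) ℝ := Matrix.of fun _ _ => (1 : ℝ)

/-- The GRAMPA similarity matrix `X̂ = ∑_{i,j} (1/((λ_i − μ_j)² + η²)) u_i u_iᵀ J v_j v_jᵀ`
built from spectral data `(lam, u)` and `(mu, v)` with bandwidth `η`. -/
def grampa {n : ℕ} (η : ℝ) (lam mu : Fin n → ℝ) (u v : Fin n → Fin n → ℝ) :
    Matrix (Fin n) (Fin n) ℝ :=
  ∑ i, ∑ j, (1 / ((lam i - mu j) ^ 2 + η ^ 2)) •
    (Matrix.vecMulVec (u i) (u i) * matJ n * Matrix.vecMulVec (v j) (v j))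

/-- **Closed form and convergence of gradient descent for GRAMPA.**
For the gradient descent iterates `X⁽⁰⁾ = 0`,
`X⁽ᵗ⁺¹⁾ = X⁽ᵗ⁾ − γ(A²X⁽ᵗ⁾ + X⁽ᵗ⁾B² − 2AX⁽ᵗ⁾B + η²X⁽ᵗ⁾ − J)`, every iterate has the
closed spectral form
`X⁽ᵗ⁾ = ∑_{i,j} [(1 − (1 − γη² − γ(λ_i − μ_j)²)ᵗ)/(η² + (λ_i − μ_j)²)] u_i u_iᵀ J v_j v_jᵀ`;
and if `γ < 1/(η² + (λ_i − μ_j)²)` for all `i, j` then `X⁽ᵗ⁾ → X̂` (entrywise)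
as `t → ∞`, where `X̂` is the GRAMPA similarity matrix. -/
lemma vmv_mul_vmv {n : ℕ} (a b c d : Fin n → ℝ) :
    Matrix.vecMulVec a b * Matrix.vecMulVec c d
      = (∑ k, b k * c k) • Matrix.vecMulVec a d := by
  ext i j
  simp only [Matrix.mul_apply, Matrix.vecMulVec_apply, Matrix.smul_apply, smul_eq_mul,
    Finset.sum_mul]
  exact Finset.sum_congr rfl fun k _ => by ring

lemma eig_left {n : ℕ} (A : Matrix (Fin n) (Fin n) ℝ)
    (lam : Fin n → ℝ) (u : Fin n → Fin n → ℝ)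
    (hd : IsSpectralDecomp A lam u) (i : Fin n) :
    A * Matrix.vecMulVec (u i) (u i) = lam i • Matrix.vecMulVec (u i) (u i) := by
  obtain ⟨hu, hAe⟩ := hd
  rw [hAe, Finset.sum_mul]
  rw [Finset.sum_eq_single i]
  · rw [Matrix.smul_mul, vmv_mul_vmv, hu i i, if_pos rfl, one_smul]
  · intro k _ hk
    rw [Matrix.smul_mul, vmv_mul_vmv, hu k i, if_neg hk, zero_smul, smul_zero]
  · intro h; exact absurd (Finset.mem_univ i) h

lemma eig_right {n : ℕ} (B : Matrix (Fin n) (Fin n) ℝ)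
    (mu : Fin n → ℝ) (v : Fin n → Fin n → ℝ)
    (hd : IsSpectralDecomp B mu v) (j : Fin n) :
    Matrix.vecMulVec (v j) (v j) * B = mu j • Matrix.vecMulVec (v j) (v j) := by
  obtain ⟨hv, hBe⟩ := hd
  rw [hBe, Finset.mul_sum]
  rw [Finset.sum_eq_single j]
  · rw [Matrix.mul_smul, vmv_mul_vmv, hv j j, if_pos rfl, one_smul]
  · intro k _ hk
    rw [Matrix.mul_smul, vmv_mul_vmv, hv j k, if_neg (fun h => hk h.symm), zero_smul, smul_zero]
  · intro h; exact absurd (Finset.mem_univ j) h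

lemma sum_proj {n : ℕ} (u : Fin n → Fin n → ℝ)
    (hu : ∀ i j, (∑ k, u i k * u j k) = if i = j then (1 : ℝ) else 0) :
    ∑ i, Matrix.vecMulVec (u i) (u i) = (1 : Matrix (Fin n) (Fin n) ℝ) := by
  have hU : (Matrix.of u) * (Matrix.of u)ᵀ = 1 := by
    ext i j
    simpa [Matrix.mul_apply, Matrix.one_apply] using hu i j
  have hU' : (Matrix.of u)ᵀ * (Matrix.of u) = 1 := mul_eq_one_comm.mp hU
  ext k l
  have := congrFun (congrFun hU' k) l
  simp only [Matrix.mul_apply, Matrix.transpose_apply, Matrix.of_apply] at this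
  simpa [Matrix.sum_apply, Matrix.vecMulVec_apply] using this

theorem grampa_gradient_descent_closed_form {n : ℕ}
    (A B : Matrix (Fin n) (Fin n) ℝ) (hA : A.IsSymm) (hB : B.IsSymm)
    (η γ : ℝ) (hη : 0 < η) (hγ : 0 < γ)
    (lam mu : Fin n → ℝ) (u v : Fin n → Fin n → ℝ)
    (hdA : IsSpectralDecomp A lam u) (hdB : IsSpectralDecomp B mu v)
    (X : ℕ → Matrix (Fin n) (Fin n) ℝ)
    (hX0 : X 0 = 0)
    (hXrec : ∀ t, X (t + 1) =
      X t - γ • (A * A * X t + X t * (B * B) - (2 : ℝ) • (A * X t * B)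
        + η ^ 2 • X t - matJ n)) :
    (∀ t, X t = ∑ i, ∑ j,
        ((1 - (1 - γ * η ^ 2 - γ * (lam i - mu j) ^ 2) ^ t) /
            (η ^ 2 + (lam i - mu j) ^ 2)) •
          (Matrix.vecMulVec (u i) (u i) * matJ n * Matrix.vecMulVec (v j) (v j))) ∧
    ((∀ i j, γ < 1 / (η ^ 2 + (lam i - mu j) ^ 2)) →
      ∀ k l, Filter.Tendsto (fun t => X t k l) Filter.atTop
        (nhds (grampa η lam mu u v k l))) := by
  set M : Fin n → Fin n → Matrix (Fin n) (Fin n) ℝ := fun i j =>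
    Matrix.vecMulVec (u i) (u i) * matJ n * Matrix.vecMulVec (v j) (v j) with hM
  set d : Fin n → Fin n → ℝ := fun i j => η ^ 2 + (lam i - mu j) ^ 2 with hdd
  have hdpos : ∀ i j, 0 < d i j := fun i j => by positivity
  set c : ℕ → Fin n → Fin n → ℝ := fun t i j =>
    (1 - (1 - γ * η ^ 2 - γ * (lam i - mu j) ^ 2) ^ t) / d i j with hc
  -- eigen relations for M
  have hAM : ∀ i j, A * M i j = lam i • M i j := by
    intro i j
    simp only [hM]
    rw [← Matrix.mul_assoc, ← Matrix.mul_assoc, eig_left A lam u hdA i,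
      Matrix.smul_mul, Matrix.smul_mul]
  have hMB : ∀ i j, M i j * B = mu j • M i j := by
    intro i j
    simp only [hM]
    rw [Matrix.mul_assoc, eig_right B mu v hdB j, Matrix.mul_smul]
  have hJ : matJ n = ∑ i, ∑ j, M i j := by
    have h1 : (∑ i, Matrix.vecMulVec (u i) (u i)) = 1 := sum_proj u hdA.1
    have h2 : (∑ j, Matrix.vecMulVec (v j) (v j)) = 1 := sum_proj v hdB.1
    calc matJ n = (∑ i, Matrix.vecMulVec (u i) (u i)) * matJ n *
            (∑ j, Matrix.vecMulVec (v j) (v j)) := by rw [h1, h2, one_mul, mul_one]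
      _ = ∑ i, ∑ j, M i j := by
          rw [Finset.sum_mul, Finset.sum_mul]
          refine Finset.sum_congr rfl fun i _ => ?_
          rw [Finset.mul_sum]
  -- closed form by induction
  have hmain : ∀ t, X t = ∑ i, ∑ j, c t i j • M i j := by
    intro t
    induction t with
    | zero =>
      simp [hX0, hc, pow_zero]
    | succ t ih =>
      rw [hXrec t, ih, hJ]
      have e1 : A * A * (∑ i, ∑ j, c t i j • M i j)
          = ∑ i, ∑ j, (lam i ^ 2 * c t i j) • M i j := by
        rw [Finset.mul_sum]
        refine Finset.sum_congr rfl fun i _ => ?_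
        rw [Finset.mul_sum]
        refine Finset.sum_congr rfl fun j _ => ?_
        rw [Matrix.mul_smul, Matrix.mul_assoc, hAM, Matrix.mul_smul, hAM,
          smul_smul, smul_smul]
        congr 1; ring
      have e2 : (∑ i, ∑ j, c t i j • M i j) * (B * B)
          = ∑ i, ∑ j, (mu j ^ 2 * c t i j) • M i j := by
        rw [Finset.sum_mul]
        refine Finset.sum_congr rfl fun i _ => ?_
        rw [Finset.sum_mul]
        refine Finset.sum_congr rfl fun j _ => ?_
        rw [Matrix.smul_mul, ← Matrix.mul_assoc, hMB, Matrix.smul_mul, hMB,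
          smul_smul, smul_smul]
        congr 1; ring
      have e3 : A * (∑ i, ∑ j, c t i j • M i j) * B
          = ∑ i, ∑ j, (lam i * mu j * c t i j) • M i j := by
        rw [Finset.mul_sum, Finset.sum_mul]
        refine Finset.sum_congr rfl fun i _ => ?_
        rw [Finset.mul_sum, Finset.sum_mul]
        refine Finset.sum_congr rfl fun j _ => ?_
        rw [Matrix.mul_smul, hAM, Matrix.smul_mul, Matrix.smul_mul, hMB,
          smul_smul, smul_smul]
        congr 1; ring
      rw [e1, e2, e3]
      simp only [← Finset.sum_add_distrib, ← Finset.sum_sub_distrib, Finset.smul_sum]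
      refine Finset.sum_congr rfl fun i _ => ?_
      refine Finset.sum_congr rfl fun j _ => ?_
      have hne : d i j ≠ 0 := ne_of_gt (hdpos i j)
      have hcoef : c t i j - γ * (lam i ^ 2 * c t i j + mu j ^ 2 * c t i j
          - 2 * (lam i * mu j * c t i j) + η ^ 2 * c t i j - 1) = c (t + 1) i j := by
        rw [hc, hdd]
        field_simp
        ring
      calc c t i j • M i j - γ • ((lam i ^ 2 * c t i j) • M i j
              + (mu j ^ 2 * c t i j) • M i j
              - (2 : ℝ) • ((lam i * mu j * c t i j) • M i j)
              + η ^ 2 • (c t i j • M i j) - M i j)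
          = (c t i j - γ * (lam i ^ 2 * c t i j + mu j ^ 2 * c t i j
              - 2 * (lam i * mu j * c t i j) + η ^ 2 * c t i j - 1)) • M i j := by
            module
        _ = c (t + 1) i j • M i j := by rw [hcoef]
  refine ⟨hmain, ?_⟩
  intro hγ' k l
  have hXkl : ∀ t, X t k l = ∑ i, ∑ j, c t i j * M i j k l := by
    intro t
    rw [hmain t]
    simp [Matrix.sum_apply]
  have hGkl : grampa η lam mu u v k l = ∑ i, ∑ j, (1 / d i j) * M i j k l := by
    rw [grampa]
    simp only [Matrix.sum_apply, Matrix.smul_apply, smul_eq_mul]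
    refine Finset.sum_congr rfl fun i _ => Finset.sum_congr rfl fun j _ => ?_
    simp only [hM, hdd]
    rw [show (lam i - mu j) ^ 2 + η ^ 2 = η ^ 2 + (lam i - mu j) ^ 2 from add_comm _ _]
  simp only [hXkl, hGkl]
  refine tendsto_finset_sum _ fun i _ => tendsto_finset_sum _ fun j _ => ?_
  have habs : |1 - γ * η ^ 2 - γ * (lam i - mu j) ^ 2| < 1 := by
    have hd0 : (0:ℝ) < η ^ 2 + (lam i - mu j) ^ 2 := by positivity
    have h1 : γ * (η ^ 2 + (lam i - mu j) ^ 2) < 1 := (lt_div_iff₀ hd0).mp (hγ' i j)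
    have h2 : 0 < γ * (η ^ 2 + (lam i - mu j) ^ 2) := mul_pos hγ hd0
    rw [abs_lt]
    constructor <;> nlinarith
  have hpow : Filter.Tendsto (fun t => (1 - γ * η ^ 2 - γ * (lam i - mu j) ^ 2) ^ t)
      Filter.atTop (nhds 0) := tendsto_pow_atTop_nhds_zero_of_abs_lt_one habs
  have : Filter.Tendsto (fun t => c t i j * M i j k l) Filter.atTop
      (nhds (((1 - 0) / d i j) * M i j k l)) := by
    exact (((tendsto_const_nhds.sub hpow).div_const (d i j)).mul_const (M i j k l))
  simpa using this

end
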